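/- arXiv:1901.10837 — 4 statements merged into one kernel-verified Lean document; each statement's English description precedes it below -/
import Mathlib

section
/- Under MC noise on the sensitive attribute with parameters α, β restricted to the event Y = 1 yielding parameters α', β' ∈ (0,1) with α' + β' < 1 (as in Lemma 1), for any bounded fairness loss L and classifier f: the equality-of-opportunity disparity satisfies |E_{D_{0,1,corr}}[L(f)] − E_{D_{1,1,corr}}[L(f)]| = (1 − α' − β')·|E_{D_{0,1}}[L(f)] − E_{D_{1,1}}[L(f)]|, hence the clean EO constraint at tolerance τ is equivalent to the corrupted EO constraint at tolerance τ·(1 − α' − β'). -/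
open MeasureTheory

/-- Theorem 1, EO case: under MC noise restricted to `Y = 1` with
parameters `α', β'`, the EO disparity scales by `(1 - α' - β')`, hence the clean EO
constraint at tolerance `τ` is equivalent to the corrupted one at `τ * (1 - α' - β')`. -/
theorem mc_eo_disparity_scaling
    {𝓧 : Type*} [MeasurableSpace 𝓧]
    (D11 D01 : Measure 𝓧) [IsProbabilityMeasure D11] [IsProbabilityMeasure D01]
    (α' β' : ℝ) (hα' : α' ∈ Set.Ioo (0:ℝ) 1) (hβ' : β' ∈ Set.Ioo (0:ℝ) 1)
    (hαβ' : α' + β' < 1)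
    (D11c D01c : Measure 𝓧)
    (hD11c : D11c = ENNReal.ofReal (1 - α') • D11 + ENNReal.ofReal α' • D01)
    (hD01c : D01c = ENNReal.ofReal β' • D11 + ENNReal.ofReal (1 - β') • D01)
    (f : 𝓧 → ℝ) (L : ℝ → ℝ) (hmeas : Measurable fun x => L (f x))
    (C : ℝ) (hbound : ∀ x, |L (f x)| ≤ C) :
    |(∫ x, L (f x) ∂D01c) - (∫ x, L (f x) ∂D11c)|
        = (1 - α' - β') * |(∫ x, L (f x) ∂D01) - (∫ x, L (f x) ∂D11)| ∧
      ∀ τ : ℝ, 0 < τ →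
        (|(∫ x, L (f x) ∂D01) - (∫ x, L (f x) ∂D11)| ≤ τ ↔
          |(∫ x, L (f x) ∂D01c) - (∫ x, L (f x) ∂D11c)| ≤ τ * (1 - α' - β')) := by
  obtain ⟨hα0, hα1⟩ := hα'
  obtain ⟨hβ0, hβ1⟩ := hβ'
  have hint : ∀ (μ : Measure 𝓧) [IsProbabilityMeasure μ],
      Integrable (fun x => L (f x)) μ := by
    intro μ _
    exact ⟨hmeas.aestronglyMeasurable,
      HasFiniteIntegral.of_bounded (C := C) (Filter.Eventually.of_forall hbound)⟩
  have key : ∀ (a b : ℝ), 0 ≤ a → 0 ≤ b →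
      (∫ x, L (f x) ∂(ENNReal.ofReal a • D11 + ENNReal.ofReal b • D01))
        = a * (∫ x, L (f x) ∂D11) + b * (∫ x, L (f x) ∂D01) := by
    intro a b ha hb
    rw [integral_add_measure, integral_smul_measure, integral_smul_measure,
      ENNReal.toReal_ofReal ha, ENNReal.toReal_ofReal hb]
    · simp [smul_eq_mul]
    · exact (hint D11).smul_measure ENNReal.ofReal_ne_top
    · exact (hint D01).smul_measure ENNReal.ofReal_ne_top
  have h11 : (∫ x, L (f x) ∂D11c)
      = (1 - α') * (∫ x, L (f x) ∂D11) + α' * (∫ x, L (f x) ∂D01) := by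
    rw [hD11c]; exact key _ _ (by linarith) hα0.le
  have h01 : (∫ x, L (f x) ∂D01c)
      = β' * (∫ x, L (f x) ∂D11) + (1 - β') * (∫ x, L (f x) ∂D01) := by
    rw [hD01c]; exact key _ _ hβ0.le (by linarith)
  have hdiff : (∫ x, L (f x) ∂D01c) - (∫ x, L (f x) ∂D11c)
      = (1 - α' - β') * ((∫ x, L (f x) ∂D01) - (∫ x, L (f x) ∂D11)) := by
    rw [h11, h01]; ring
  have hscale : |(∫ x, L (f x) ∂D01c) - (∫ x, L (f x) ∂D11c)|
      = (1 - α' - β') * |(∫ x, L (f x) ∂D01) - (∫ x, L (f x) ∂D11)| := by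
    rw [hdiff, abs_mul, abs_of_pos (by linarith : (0:ℝ) < 1 - α' - β')]
  refine ⟨hscale, fun τ hτ => ?_⟩
  rw [hscale, mul_comm τ]
  exact (mul_le_mul_iff_right₀ (by linarith : (0:ℝ) < 1 - α' - β')).symm
end

section
/- Under MC noise on the sensitive attribute with parameters α, β ∈ (0,1), α + β < 1, for any bounded classifier score c and tolerance τ > 0: if max_a |E_{Dcorr}[c(X)|A=a] − E_{Dcorr}[c(X)]| < (1/2)·τ·(1−α−β), then max_a |E_D[c(X)|A=a] − E_D[c(X)]| < τ. -/
open MeasureTheory ProbabilityTheory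

lemma cond_finite {Ω : Type*} [MeasurableSpace Ω] (μ : Measure Ω) [IsProbabilityMeasure μ]
    (s : Set Ω) : IsFiniteMeasure (μ[|s]) := by
  constructor
  rw [ProbabilityTheory.cond]
  simp only [Measure.smul_apply, Measure.restrict_apply MeasurableSet.univ, Set.univ_inter,
    smul_eq_mul]
  rcases eq_or_ne (μ s) 0 with h | h
  · simp [h]
  · rw [ENNReal.inv_mul_cancel h (measure_ne_top μ s)]
    exact ENNReal.one_lt_top

/-- Corollary 2, DP case: enforcing the corrupted Agarwal-style
constraint at tolerance `(1/2)·τ·(1-α-β)` guarantees the clean constraint at `τ`. -/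
theorem agarwal_constraint_mc_half_sufficient
    {Ω 𝓧 : Type*} [MeasurableSpace Ω] [MeasurableSpace 𝓧]
    (μ : Measure Ω) [IsProbabilityMeasure μ]
    (X : Ω → 𝓧) (A Acorr : Ω → Fin 2)
    (hX : Measurable X) (hA : Measurable A) (hAc : Measurable Acorr)
    (α β : ℝ) (hα : α ∈ Set.Ioo (0:ℝ) 1) (hβ : β ∈ Set.Ioo (0:ℝ) 1) (hαβ : α + β < 1)
    (hmix1 : (μ[|{ω | Acorr ω = 1}]).map X
        = ENNReal.ofReal (1 - α) • (μ[|{ω | A ω = 1}]).map X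
          + ENNReal.ofReal α • (μ[|{ω | A ω = 0}]).map X)
    (hmix0 : (μ[|{ω | Acorr ω = 0}]).map X
        = ENNReal.ofReal β • (μ[|{ω | A ω = 1}]).map X
          + ENNReal.ofReal (1 - β) • (μ[|{ω | A ω = 0}]).map X)
    (c : 𝓧 → ℝ) (hc : Measurable c) (C : ℝ) (hbound : ∀ x, |c x| ≤ C)
    (τ : ℝ) (hτ : 0 < τ)
    (hcon : max |(∫ ω, c (X ω) ∂μ[|{ω | Acorr ω = 1}]) - ∫ ω, c (X ω) ∂μ|
        |(∫ ω, c (X ω) ∂μ[|{ω | Acorr ω = 0}]) - ∫ ω, c (X ω) ∂μ|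
        < (1/2) * τ * (1 - α - β)) :
    max |(∫ ω, c (X ω) ∂μ[|{ω | A ω = 1}]) - ∫ ω, c (X ω) ∂μ|
        |(∫ ω, c (X ω) ∂μ[|{ω | A ω = 0}]) - ∫ ω, c (X ω) ∂μ| < τ := by
  obtain ⟨hα0, hα1⟩ := hα
  obtain ⟨hβ0, hβ1⟩ := hβ
  -- notation
  set s1 : Set Ω := {ω | A ω = 1}
  set s0 : Set Ω := {ω | A ω = 0}
  set t1 : Set Ω := {ω | Acorr ω = 1}
  set t0 : Set Ω := {ω | Acorr ω = 0}
  have hfin1 := cond_finite μ s1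
  have hfin0 := cond_finite μ s0
  have hft1 := cond_finite μ t1
  have hft0 := cond_finite μ t0
  -- integral over cond = integral over mapped
  have hmap : ∀ (ν : Measure Ω), ∫ ω, c (X ω) ∂ν = ∫ x, c x ∂(ν.map X) := fun ν =>
    (integral_map hX.aemeasurable hc.aestronglyMeasurable).symm
  have hint : ∀ (ν : Measure 𝓧), IsFiniteMeasure ν → Integrable c ν := by
    intro ν hν
    exact Integrable.mono' (integrable_const C) hc.aestronglyMeasurable
      (Filter.Eventually.of_forall fun x => hbound x)
  have hintmap : ∀ (s : Set Ω), Integrable c ((μ[|s]).map X) := by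
    intro s
    have := cond_finite μ s
    exact hint _ (Measure.isFiniteMeasure_map _ _)
  -- compute corrupted integrals
  have key : ∀ (r1 r0 : ℝ), 0 ≤ r1 → 0 ≤ r0 →
      ∫ x, c x ∂(ENNReal.ofReal r1 • (μ[|s1]).map X + ENNReal.ofReal r0 • (μ[|s0]).map X)
      = r1 * ∫ x, c x ∂((μ[|s1]).map X) + r0 * ∫ x, c x ∂((μ[|s0]).map X) := by
    intro r1 r0 h1 h0
    rw [integral_add_measure ((hintmap s1).smul_measure ENNReal.ofReal_ne_top)
        ((hintmap s0).smul_measure ENNReal.ofReal_ne_top),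
      integral_smul_measure, integral_smul_measure,
      ENNReal.toReal_ofReal h1, ENNReal.toReal_ofReal h0]
    simp [smul_eq_mul]
  have e1 : ∫ ω, c (X ω) ∂μ[|t1]
      = (1 - α) * ∫ ω, c (X ω) ∂μ[|s1] + α * ∫ ω, c (X ω) ∂μ[|s0] := by
    rw [hmap, hmix1, key _ _ (by linarith) (le_of_lt hα0), ← hmap, ← hmap]
  have e0 : ∫ ω, c (X ω) ∂μ[|t0]
      = β * ∫ ω, c (X ω) ∂μ[|s1] + (1 - β) * ∫ ω, c (X ω) ∂μ[|s0] := by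
    rw [hmap, hmix0, key _ _ (le_of_lt hβ0) (by linarith), ← hmap, ← hmap]
  -- arithmetic
  set m : ℝ := ∫ ω, c (X ω) ∂μ
  set u : ℝ := (∫ ω, c (X ω) ∂μ[|s1]) - m
  set v : ℝ := (∫ ω, c (X ω) ∂μ[|s0]) - m
  have ha : (∫ ω, c (X ω) ∂μ[|t1]) - m = (1 - α) * u + α * v := by
    rw [e1]; ring
  have hb : (∫ ω, c (X ω) ∂μ[|t0]) - m = β * u + (1 - β) * v := by
    rw [e0]; ring
  rw [ha, hb] at hcon
  have h1 := (le_max_left |(1 - α) * u + α * v| |β * u + (1 - β) * v|).trans_lt hcon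
  have h2 := (le_max_right |(1 - α) * u + α * v| |β * u + (1 - β) * v|).trans_lt hcon
  rw [abs_lt] at h1 h2
  rw [max_lt_iff, abs_lt, abs_lt]
  constructor <;> constructor <;> nlinarith [h1.1, h1.2, h2.1, h2.2]
end

section
/- CCN noise with flip probabilities ρ⁺, ρ⁻ ∈ [0,1), ρ⁺ + ρ⁻ < 1 on a binary attribute A with clean conditionals D1, D0 and base rate π = P[A=1] yields corrupted conditional distributions that are of MC form: P(· | A_noisy = 1) = (1-α)D1 + αD0 and P(· | A_noisy = 0) = βD1 + (1-β)D0, where α = (1−π)ρ⁻ / (π(1−ρ⁺) + (1−π)ρ⁻) and β = πρ⁺ / (πρ⁺ + (1−π)(1−ρ⁻)), assuming both denominators are positive. Moreover α + β < 1. -/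
open MeasureTheory ProbabilityTheory

/-- CCN noise on a binary attribute yields corrupted conditional
distributions of MC form, with explicit mixing weights `α, β` and `α + β < 1`. -/
theorem ccn_is_mc
    {Ω 𝓩 : Type*} [MeasurableSpace Ω] [MeasurableSpace 𝓩]
    (μ : Measure Ω) [IsProbabilityMeasure μ]
    (Z : Ω → 𝓩) (A Anoisy : Ω → Fin 2)
    (hZ : Measurable Z) (hA : Measurable A) (hAn : Measurable Anoisy)
    (ρp ρm : ℝ) (hρp : 0 ≤ ρp) (hρp1 : ρp < 1) (hρm : 0 ≤ ρm) (hρm1 : ρm < 1)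
    (hρsum : ρp + ρm < 1)
    -- CCN channel: `Anoisy` flips `A` with probability `ρ⁺`/`ρ⁻`, independently of `Z` given `A`
    (hccn1 : ∀ U : Set 𝓩, MeasurableSet U →
      μ {ω | Z ω ∈ U ∧ A ω = 1 ∧ Anoisy ω = 0}
        = ENNReal.ofReal ρp * μ {ω | Z ω ∈ U ∧ A ω = 1} ∧
      μ {ω | Z ω ∈ U ∧ A ω = 1 ∧ Anoisy ω = 1}
        = ENNReal.ofReal (1 - ρp) * μ {ω | Z ω ∈ U ∧ A ω = 1})
    (hccn0 : ∀ U : Set 𝓩, MeasurableSet U →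
      μ {ω | Z ω ∈ U ∧ A ω = 0 ∧ Anoisy ω = 1}
        = ENNReal.ofReal ρm * μ {ω | Z ω ∈ U ∧ A ω = 0} ∧
      μ {ω | Z ω ∈ U ∧ A ω = 0 ∧ Anoisy ω = 0}
        = ENNReal.ofReal (1 - ρm) * μ {ω | Z ω ∈ U ∧ A ω = 0})
    (π : ℝ) (hπ : π = (μ {ω | A ω = 1}).toReal) (hπ0 : 0 < π) (hπ1 : π < 1)
    (α β : ℝ)
    (hαdef : α = (1 - π) * ρm / (π * (1 - ρp) + (1 - π) * ρm))
    (hβdef : β = π * ρp / (π * ρp + (1 - π) * (1 - ρm)))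
    (hden1 : 0 < π * (1 - ρp) + (1 - π) * ρm)
    (hden0 : 0 < π * ρp + (1 - π) * (1 - ρm)) :
    (μ[|{ω | Anoisy ω = 1}]).map Z
        = ENNReal.ofReal (1 - α) • (μ[|{ω | A ω = 1}]).map Z
          + ENNReal.ofReal α • (μ[|{ω | A ω = 0}]).map Z ∧
      (μ[|{ω | Anoisy ω = 0}]).map Z
        = ENNReal.ofReal β • (μ[|{ω | A ω = 1}]).map Z
          + ENNReal.ofReal (1 - β) • (μ[|{ω | A ω = 0}]).map Z ∧
      α + β < 1 := by
  have hπ1' : (0:ℝ) < 1 - π := by linarith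
  have hρp' : (0:ℝ) ≤ 1 - ρp := by linarith
  have hρm' : (0:ℝ) ≤ 1 - ρm := by linarith
  have hfin2 : ∀ a : Fin 2, a = 0 ∨ a = 1 := by decide
  have hne : ∀ a : Fin 2, a = 0 → a = 1 → False := by decide
  have hs1 : MeasurableSet {ω | A ω = 1} := hA (measurableSet_singleton 1)
  have hs0 : MeasurableSet {ω | A ω = 0} := hA (measurableSet_singleton 0)
  have ht1 : MeasurableSet {ω | Anoisy ω = 1} := hAn (measurableSet_singleton 1)
  have ht0 : MeasurableSet {ω | Anoisy ω = 0} := hAn (measurableSet_singleton 0)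
  have m1 : μ {ω | A ω = 1} = ENNReal.ofReal π := by
    rw [hπ, ENNReal.ofReal_toReal (measure_ne_top μ _)]
  have m0 : μ {ω | A ω = 0} = ENNReal.ofReal (1 - π) := by
    have hcompl : {ω | A ω = 0} = {ω | A ω = 1}ᶜ := by
      ext ω
      simp only [Set.mem_setOf_eq, Set.mem_compl_iff]
      rcases hfin2 (A ω) with h | h <;> simp [h] <;> intro h' <;> exact hne _ h h'
    rw [hcompl, measure_compl hs1 (measure_ne_top μ _), measure_univ, m1,
      ENNReal.ofReal_sub 1 hπ0.le, ENNReal.ofReal_one]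
  -- decomposition of the noisy events
  have hdec : ∀ (j : Fin 2) (cp cm : ℝ),
      (∀ U : Set 𝓩, MeasurableSet U →
        μ {ω | Z ω ∈ U ∧ A ω = 1 ∧ Anoisy ω = j}
          = ENNReal.ofReal cp * μ {ω | Z ω ∈ U ∧ A ω = 1}) →
      (∀ U : Set 𝓩, MeasurableSet U →
        μ {ω | Z ω ∈ U ∧ A ω = 0 ∧ Anoisy ω = j}
          = ENNReal.ofReal cm * μ {ω | Z ω ∈ U ∧ A ω = 0}) →
      ∀ U : Set 𝓩, MeasurableSet U →
        μ ({ω | Anoisy ω = j} ∩ Z ⁻¹' U)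
          = ENNReal.ofReal cp * μ {ω | Z ω ∈ U ∧ A ω = 1}
            + ENNReal.ofReal cm * μ {ω | Z ω ∈ U ∧ A ω = 0} := by
    intro j cp cm h1 h0 U hU
    have hset : {ω | Anoisy ω = j} ∩ Z ⁻¹' U
        = {ω | Z ω ∈ U ∧ A ω = 1 ∧ Anoisy ω = j}
          ∪ {ω | Z ω ∈ U ∧ A ω = 0 ∧ Anoisy ω = j} := by
      ext ω
      simp only [Set.mem_inter_iff, Set.mem_preimage, Set.mem_setOf_eq, Set.mem_union]
      rcases hfin2 (A ω) with h | h <;> simp [h] <;> tauto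
    have hdisj : Disjoint {ω | Z ω ∈ U ∧ A ω = 1 ∧ Anoisy ω = j}
        {ω | Z ω ∈ U ∧ A ω = 0 ∧ Anoisy ω = j} := by
      rw [Set.disjoint_left]
      rintro ω ⟨-, h1', -⟩ ⟨-, h0', -⟩
      exact hne _ h0' h1'
    have hm : MeasurableSet {ω | Z ω ∈ U ∧ A ω = 0 ∧ Anoisy ω = j} :=
      (hZ hU).inter ((hA (measurableSet_singleton 0)).inter (hAn (measurableSet_singleton j)))
    rw [hset, measure_union hdisj hm, h1 U hU, h0 U hU]
  have hdec1 := hdec 1 (1 - ρp) ρm (fun U hU => (hccn1 U hU).2) (fun U hU => (hccn0 U hU).1)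
  have hdec0 := hdec 0 ρp (1 - ρm) (fun U hU => (hccn1 U hU).1) (fun U hU => (hccn0 U hU).2)
  -- main computation, applied symmetrically to the two noisy classes
  have main : ∀ (t : Set Ω) (a b c1 c2 : ℝ), MeasurableSet t → 0 ≤ a → 0 ≤ b → 0 ≤ c1 → 0 ≤ c2 →
      (∀ U : Set 𝓩, MeasurableSet U →
        μ (t ∩ Z ⁻¹' U) = ENNReal.ofReal a * μ {ω | Z ω ∈ U ∧ A ω = 1}
          + ENNReal.ofReal b * μ {ω | Z ω ∈ U ∧ A ω = 0}) →
      0 < a * π + b * (1 - π) →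
      c1 = a * π / (a * π + b * (1 - π)) →
      c2 = b * (1 - π) / (a * π + b * (1 - π)) →
      (μ[|t]).map Z = ENNReal.ofReal c1 • (μ[|{ω | A ω = 1}]).map Z
        + ENNReal.ofReal c2 • (μ[|{ω | A ω = 0}]).map Z := by
    intro t a b c1 c2 ht ha hb hc1 hc2 hde hd hc1e hc2e
    have hμt : μ t = ENNReal.ofReal (a * π + b * (1 - π)) := by
      have h := hde Set.univ MeasurableSet.univ
      simp only [Set.preimage_univ, Set.inter_univ, Set.mem_univ, true_and] at h
      rw [h, m1, m0, ← ENNReal.ofReal_mul ha, ← ENNReal.ofReal_mul hb,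
        ← ENNReal.ofReal_add (by positivity) (by positivity)]
    have e1 : (a * π + b * (1 - π))⁻¹ * a = c1 * π⁻¹ := by
      rw [hc1e]; field_simp
    have e2 : (a * π + b * (1 - π))⁻¹ * b = c2 * (1 - π)⁻¹ := by
      rw [hc2e]; field_simp
    refine Measure.ext fun U hU => ?_
    have hsetx : {ω | Z ω ∈ U ∧ A ω = 1} = {ω | A ω = 1} ∩ Z ⁻¹' U := by
      ext ω; simp only [Set.mem_inter_iff, Set.mem_preimage, Set.mem_setOf_eq]; tauto
    have hsety : {ω | Z ω ∈ U ∧ A ω = 0} = {ω | A ω = 0} ∩ Z ⁻¹' U := by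
      ext ω; simp only [Set.mem_inter_iff, Set.mem_preimage, Set.mem_setOf_eq]; tauto
    rw [Measure.map_apply hZ hU, cond_apply ht μ, hde U hU, hμt, hsetx, hsety]
    simp only [Measure.add_apply, Measure.smul_apply, smul_eq_mul,
      Measure.map_apply hZ hU, cond_apply hs1 μ, cond_apply hs0 μ, m1, m0]
    rw [← ENNReal.ofReal_inv_of_pos hd, ← ENNReal.ofReal_inv_of_pos hπ0,
      ← ENNReal.ofReal_inv_of_pos hπ1']
    set x := μ ({ω | A ω = 1} ∩ Z ⁻¹' U)
    set y := μ ({ω | A ω = 0} ∩ Z ⁻¹' U)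
    calc ENNReal.ofReal (a * π + b * (1 - π))⁻¹ * (ENNReal.ofReal a * x + ENNReal.ofReal b * y)
        = ENNReal.ofReal ((a * π + b * (1 - π))⁻¹ * a) * x
            + ENNReal.ofReal ((a * π + b * (1 - π))⁻¹ * b) * y := by
          rw [ENNReal.ofReal_mul (by positivity), ENNReal.ofReal_mul (by positivity)]; ring
      _ = ENNReal.ofReal (c1 * π⁻¹) * x + ENNReal.ofReal (c2 * (1 - π)⁻¹) * y := by
          rw [e1, e2]
      _ = ENNReal.ofReal c1 * (ENNReal.ofReal π⁻¹ * x)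
            + ENNReal.ofReal c2 * (ENNReal.ofReal (1 - π)⁻¹ * y) := by
          rw [ENNReal.ofReal_mul hc1, ENNReal.ofReal_mul hc2]; ring
  have hd1 : π * (1 - ρp) + (1 - π) * ρm ≠ 0 := hden1.ne'
  have hd0 : π * ρp + (1 - π) * (1 - ρm) ≠ 0 := hden0.ne'
  have hd1' : (1 - ρp) * π + ρm * (1 - π) ≠ 0 := by
    have : (1 - ρp) * π + ρm * (1 - π) = π * (1 - ρp) + (1 - π) * ρm := by ring
    rw [this]; exact hd1
  have hd0' : ρp * π + (1 - ρm) * (1 - π) ≠ 0 := by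
    have : ρp * π + (1 - ρm) * (1 - π) = π * ρp + (1 - π) * (1 - ρm) := by ring
    rw [this]; exact hd0
  have h1α : 1 - α = (1 - ρp) * π / ((1 - ρp) * π + ρm * (1 - π)) := by
    rw [hαdef]; field_simp; ring
  have hαe : α = ρm * (1 - π) / ((1 - ρp) * π + ρm * (1 - π)) := by
    rw [hαdef]; field_simp
  have h1β : 1 - β = (1 - ρm) * (1 - π) / (ρp * π + (1 - ρm) * (1 - π)) := by
    rw [hβdef]; field_simp; ring
  have hβe : β = ρp * π / (ρp * π + (1 - ρm) * (1 - π)) := by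
    rw [hβdef]; field_simp
  have hα0 : 0 ≤ α := by rw [hαe]; positivity
  have h1α0 : 0 ≤ 1 - α := by rw [h1α]; positivity
  have hβ0 : 0 ≤ β := by rw [hβe]; positivity
  have h1β0 : 0 ≤ 1 - β := by rw [h1β]; positivity
  refine ⟨?_, ?_, ?_⟩
  · exact main {ω | Anoisy ω = 1} (1 - ρp) ρm (1 - α) α ht1 hρp' hρm h1α0 hα0 hdec1
      (by nlinarith) h1α hαe
  · exact main {ω | Anoisy ω = 0} ρp (1 - ρm) β (1 - β) ht0 hρp hρm' hβ0 h1β0 hdec0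
      (by nlinarith) hβe h1β
  · rw [hαdef, hβdef, div_add_div _ _ hden1.ne' hden0.ne',
      div_lt_one (mul_pos hden1 hden0)]
    nlinarith [mul_pos (mul_pos hπ0 hπ1') (by linarith : (0:ℝ) < 1 - ρp - ρm)]
end

section
/- Under CCN noise with equal flip probabilities ρ⁺ = ρ⁻ = ρ ∈ (0, 1/2) on a binary sensitive attribute, and for any bounded h, the corrupted mean-difference score satisfies |E[h | A_noisy=0] − E[h | A_noisy=1]| = c·|E[h | A=0] − E[h | A=1]| for some scaling constant c ∈ (0,1) depending only on ρ and the base rate π = P[A=1]; specifically c = 1 − α − β with α = (1−π)ρ/(π(1−ρ)+(1−π)ρ) and β = πρ/(πρ+(1−π)(1−ρ)). -/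
open MeasureTheory ProbabilityTheory

/-- Auxiliary: if the `Z`-distribution on `S` is `r` times the one on `T`
(setwise), then set-integrals of `h ∘ Z` scale accordingly. -/
lemma ccn_setIntegral_scale {Ω 𝓩 : Type*} [MeasurableSpace Ω] [MeasurableSpace 𝓩]
    (μ : Measure Ω) (Z : Ω → 𝓩) (hZ : Measurable Z)
    (S T : Set Ω) (r : ℝ) (hr : 0 ≤ r)
    (hST : ∀ U : Set 𝓩, MeasurableSet U →
      μ (Z ⁻¹' U ∩ S) = ENNReal.ofReal r * μ (Z ⁻¹' U ∩ T))
    (h : 𝓩 → ℝ) (hmeas : Measurable h) :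
    ∫ ω in S, h (Z ω) ∂μ = r * ∫ ω in T, h (Z ω) ∂μ := by
  have hmap : (μ.restrict S).map Z = ENNReal.ofReal r • (μ.restrict T).map Z := by
    ext U hU
    rw [Measure.map_apply hZ hU, Measure.smul_apply, Measure.map_apply hZ hU,
      Measure.restrict_apply (hZ hU), Measure.restrict_apply (hZ hU), smul_eq_mul]
    exact hST U hU
  calc ∫ ω in S, h (Z ω) ∂μ
      = ∫ z, h z ∂((μ.restrict S).map Z) :=
        (integral_map hZ.aemeasurable hmeas.aestronglyMeasurable).symm
    _ = ∫ z, h z ∂(ENNReal.ofReal r • (μ.restrict T).map Z) := by rw [hmap]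
    _ = r * ∫ z, h z ∂((μ.restrict T).map Z) := by
        rw [integral_smul_measure, ENNReal.toReal_ofReal hr, smul_eq_mul]
    _ = r * ∫ ω in T, h (Z ω) ∂μ := by
        rw [integral_map hZ.aemeasurable hmeas.aestronglyMeasurable]

set_option maxHeartbeats 1000000 in
/-- Auxiliary pure-real arithmetic identity. -/
lemma ccn_arith (ρ π I0 I1 : ℝ) (hρ0 : 0 < ρ) (hρ2 : ρ < 1/2) (hπ0 : 0 < π) (hπ1 : π < 1) :
    ((1-ρ)*(1-π)+ρ*π)⁻¹ * ((1-ρ)*I0+ρ*I1) - (ρ*(1-π)+(1-ρ)*π)⁻¹ * (ρ*I0+(1-ρ)*I1)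
    = (π*(1-π)*(1-2*ρ)/((π*ρ+(1-π)*(1-ρ))*(π*(1-ρ)+(1-π)*ρ))) * ((1-π)⁻¹*I0 - π⁻¹*I1) := by
  have h1 : ((1:ℝ)-ρ)*(1-π)+ρ*π ≠ 0 := by nlinarith
  have h2 : ρ*((1:ℝ)-π)+(1-ρ)*π ≠ 0 := by nlinarith
  have h3 : (1:ℝ)-π ≠ 0 := by nlinarith
  have h4 : π*ρ+((1:ℝ)-π)*(1-ρ) ≠ 0 := by nlinarith
  have h5 : π*((1:ℝ)-ρ)+(1-π)*ρ ≠ 0 := by nlinarith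
  have hπ : π ≠ 0 := hπ0.ne'
  rw [div_mul_eq_mul_div, eq_div_iff (mul_ne_zero h4 h5)]
  field_simp
  ring

set_option maxHeartbeats 1000000 in
/-- under symmetric CCN noise (`ρ⁺ = ρ⁻ = ρ ∈ (0,1/2)`), the corrupted
mean-difference score of any bounded `h` equals `c` times the clean one, where
`c = 1 - α - β ∈ (0,1)` with explicit `α, β` depending only on `ρ` and `π`. -/
theorem symmetric_ccn_mean_difference_scaling
    {Ω 𝓩 : Type*} [MeasurableSpace Ω] [MeasurableSpace 𝓩]
    (μ : Measure Ω) [IsProbabilityMeasure μ]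
    (Z : Ω → 𝓩) (A Anoisy : Ω → Fin 2)
    (hZ : Measurable Z) (hA : Measurable A) (hAn : Measurable Anoisy)
    (ρ : ℝ) (hρ : ρ ∈ Set.Ioo (0:ℝ) (1/2))
    (hccn1 : ∀ U : Set 𝓩, MeasurableSet U →
      μ {ω | Z ω ∈ U ∧ A ω = 1 ∧ Anoisy ω = 0}
        = ENNReal.ofReal ρ * μ {ω | Z ω ∈ U ∧ A ω = 1} ∧
      μ {ω | Z ω ∈ U ∧ A ω = 1 ∧ Anoisy ω = 1}
        = ENNReal.ofReal (1 - ρ) * μ {ω | Z ω ∈ U ∧ A ω = 1})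
    (hccn0 : ∀ U : Set 𝓩, MeasurableSet U →
      μ {ω | Z ω ∈ U ∧ A ω = 0 ∧ Anoisy ω = 1}
        = ENNReal.ofReal ρ * μ {ω | Z ω ∈ U ∧ A ω = 0} ∧
      μ {ω | Z ω ∈ U ∧ A ω = 0 ∧ Anoisy ω = 0}
        = ENNReal.ofReal (1 - ρ) * μ {ω | Z ω ∈ U ∧ A ω = 0})
    (π : ℝ) (hπ : π = (μ {ω | A ω = 1}).toReal) (hπ0 : 0 < π) (hπ1 : π < 1)
    (h : 𝓩 → ℝ) (hmeas : Measurable h) (C : ℝ) (hbound : ∀ z, |h z| ≤ C) :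
    ∃ c : ℝ, c ∈ Set.Ioo (0:ℝ) 1 ∧
      c = 1 - (1 - π) * ρ / (π * (1 - ρ) + (1 - π) * ρ)
            - π * ρ / (π * ρ + (1 - π) * (1 - ρ)) ∧
      |(∫ ω, h (Z ω) ∂μ[|{ω | Anoisy ω = 0}]) - ∫ ω, h (Z ω) ∂μ[|{ω | Anoisy ω = 1}]|
        = c * |(∫ ω, h (Z ω) ∂μ[|{ω | A ω = 0}]) - ∫ ω, h (Z ω) ∂μ[|{ω | A ω = 1}]| := by
  obtain ⟨hρ0, hρ2⟩ := hρ
  have hρ1 : ρ < 1 := by linarith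
  -- basic sets
  set s0 : Set Ω := {ω | A ω = 0} with hs0def
  set s1 : Set Ω := {ω | A ω = 1} with hs1def
  set t0 : Set Ω := {ω | Anoisy ω = 0} with ht0def
  set t1 : Set Ω := {ω | Anoisy ω = 1} with ht1def
  have hs0 : MeasurableSet s0 := hA (measurableSet_singleton 0)
  have hs1 : MeasurableSet s1 := hA (measurableSet_singleton 1)
  have ht0 : MeasurableSet t0 := hAn (measurableSet_singleton 0)
  have ht1 : MeasurableSet t1 := hAn (measurableSet_singleton 1)
  have hs0c : s0 = s1ᶜ := by
    ext ω; simp only [hs0def, hs1def, Set.mem_setOf_eq, Set.mem_compl_iff]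
    constructor
    · intro h0 h1; rw [h0] at h1; exact absurd h1 (by decide)
    · intro h1; omega
  -- scaled set-integral facts
  have key10 : ∫ ω in s1 ∩ t0, h (Z ω) ∂μ = ρ * ∫ ω in s1, h (Z ω) ∂μ := by
    refine ccn_setIntegral_scale μ Z hZ _ _ ρ hρ0.le (fun U hU => ?_) h hmeas
    have e1 : Z ⁻¹' U ∩ (s1 ∩ t0) = {ω | Z ω ∈ U ∧ A ω = 1 ∧ Anoisy ω = 0} := by
      ext ω; simp [hs1def, ht0def, and_assoc]
    have e2 : Z ⁻¹' U ∩ s1 = {ω | Z ω ∈ U ∧ A ω = 1} := by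
      ext ω; simp [hs1def]
    rw [e1, e2]; exact (hccn1 U hU).1
  have key11 : ∫ ω in s1 ∩ t1, h (Z ω) ∂μ = (1 - ρ) * ∫ ω in s1, h (Z ω) ∂μ := by
    refine ccn_setIntegral_scale μ Z hZ _ _ (1 - ρ) (by linarith) (fun U hU => ?_) h hmeas
    have e1 : Z ⁻¹' U ∩ (s1 ∩ t1) = {ω | Z ω ∈ U ∧ A ω = 1 ∧ Anoisy ω = 1} := by
      ext ω; simp [hs1def, ht1def, and_assoc]
    have e2 : Z ⁻¹' U ∩ s1 = {ω | Z ω ∈ U ∧ A ω = 1} := by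
      ext ω; simp [hs1def]
    rw [e1, e2]; exact (hccn1 U hU).2
  have key01 : ∫ ω in s0 ∩ t1, h (Z ω) ∂μ = ρ * ∫ ω in s0, h (Z ω) ∂μ := by
    refine ccn_setIntegral_scale μ Z hZ _ _ ρ hρ0.le (fun U hU => ?_) h hmeas
    have e1 : Z ⁻¹' U ∩ (s0 ∩ t1) = {ω | Z ω ∈ U ∧ A ω = 0 ∧ Anoisy ω = 1} := by
      ext ω; simp [hs0def, ht1def, and_assoc]
    have e2 : Z ⁻¹' U ∩ s0 = {ω | Z ω ∈ U ∧ A ω = 0} := by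
      ext ω; simp [hs0def]
    rw [e1, e2]; exact (hccn0 U hU).1
  have key00 : ∫ ω in s0 ∩ t0, h (Z ω) ∂μ = (1 - ρ) * ∫ ω in s0, h (Z ω) ∂μ := by
    refine ccn_setIntegral_scale μ Z hZ _ _ (1 - ρ) (by linarith) (fun U hU => ?_) h hmeas
    have e1 : Z ⁻¹' U ∩ (s0 ∩ t0) = {ω | Z ω ∈ U ∧ A ω = 0 ∧ Anoisy ω = 0} := by
      ext ω; simp [hs0def, ht0def, and_assoc]
    have e2 : Z ⁻¹' U ∩ s0 = {ω | Z ω ∈ U ∧ A ω = 0} := by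
      ext ω; simp [hs0def]
    rw [e1, e2]; exact (hccn0 U hU).2
  -- measures of the sets
  have huniv : ∀ (P : Ω → Prop), {ω | Z ω ∈ (Set.univ : Set 𝓩) ∧ P ω} = {ω | P ω} := by
    intro P; ext ω; simp
  have hm10 : μ (s1 ∩ t0) = ENNReal.ofReal ρ * μ s1 := by
    have := (hccn1 Set.univ MeasurableSet.univ).1
    rw [huniv, huniv] at this
    convert this using 2
    rfl
  have hm11 : μ (s1 ∩ t1) = ENNReal.ofReal (1 - ρ) * μ s1 := by
    have := (hccn1 Set.univ MeasurableSet.univ).2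
    rw [huniv, huniv] at this
    convert this using 2
    rfl
  have hm01 : μ (s0 ∩ t1) = ENNReal.ofReal ρ * μ s0 := by
    have := (hccn0 Set.univ MeasurableSet.univ).1
    rw [huniv, huniv] at this
    convert this using 2
    rfl
  have hm00 : μ (s0 ∩ t0) = ENNReal.ofReal (1 - ρ) * μ s0 := by
    have := (hccn0 Set.univ MeasurableSet.univ).2
    rw [huniv, huniv] at this
    convert this using 2
    rfl
  have hμs1 : (μ s1).toReal = π := hπ.symm
  have hμs0 : (μ s0).toReal = 1 - π := by
    rw [hs0c, measure_compl hs1 (measure_ne_top μ s1), measure_univ,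
      ENNReal.toReal_sub_of_le prob_le_one ENNReal.one_ne_top,
      ENNReal.toReal_one, hμs1]
  -- split t0, t1
  have hsplit : ∀ t : Set Ω, (s0 ∩ t) ∪ (s1 ∩ t) = t := by
    intro t; ext ω
    simp only [Set.mem_union, Set.mem_inter_iff, hs0def, hs1def, Set.mem_setOf_eq]
    constructor
    · rintro (⟨_, h⟩ | ⟨_, h⟩) <;> exact h
    · intro hm
      rcases Fin.exists_fin_two.mp ⟨A ω, rfl⟩ with h'
      by_cases h0 : A ω = 0
      · exact Or.inl ⟨h0, hm⟩
      · exact Or.inr ⟨by omega, hm⟩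
  have hdisj : ∀ t : Set Ω, Disjoint (s0 ∩ t) (s1 ∩ t) := by
    intro t
    refine Set.disjoint_left.mpr ?_
    rintro ω ⟨h0, _⟩ ⟨h1, _⟩
    simp only [hs0def, hs1def, Set.mem_setOf_eq] at h0 h1
    omega
  have hint : Integrable (fun ω => h (Z ω)) μ := by
    refine Integrable.mono' (integrable_const C) ((hmeas.comp hZ).aestronglyMeasurable)
      (ae_of_all _ fun ω => hbound (Z ω))
  have hμt0 : (μ t0).toReal = (1 - ρ) * (1 - π) + ρ * π := by
    rw [← hsplit t0, measure_union (hdisj t0) (hs1.inter ht0), hm00, hm10,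
      ENNReal.toReal_add (by finiteness) (by finiteness), ENNReal.toReal_mul,
      ENNReal.toReal_mul, ENNReal.toReal_ofReal (by linarith),
      ENNReal.toReal_ofReal hρ0.le, hμs0, hμs1]
  have hμt1 : (μ t1).toReal = ρ * (1 - π) + (1 - ρ) * π := by
    rw [← hsplit t1, measure_union (hdisj t1) (hs1.inter ht1), hm01, hm11,
      ENNReal.toReal_add (by finiteness) (by finiteness), ENNReal.toReal_mul,
      ENNReal.toReal_mul, ENNReal.toReal_ofReal hρ0.le,
      ENNReal.toReal_ofReal (by linarith), hμs0, hμs1]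
  have hit0 : ∫ ω in t0, h (Z ω) ∂μ
      = (1 - ρ) * ∫ ω in s0, h (Z ω) ∂μ + ρ * ∫ ω in s1, h (Z ω) ∂μ := by
    rw [← hsplit t0, setIntegral_union (hdisj t0) (hs1.inter ht0)
      hint.integrableOn hint.integrableOn, key00, key10]
  have hit1 : ∫ ω in t1, h (Z ω) ∂μ
      = ρ * ∫ ω in s0, h (Z ω) ∂μ + (1 - ρ) * ∫ ω in s1, h (Z ω) ∂μ := by
    rw [← hsplit t1, setIntegral_union (hdisj t1) (hs1.inter ht1)
      hint.integrableOn hint.integrableOn, key01, key11]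
  -- conditional integrals
  have hcond : ∀ s : Set Ω, ∫ ω, h (Z ω) ∂μ[|s]
      = ((μ s).toReal)⁻¹ * ∫ ω in s, h (Z ω) ∂μ := by
    intro s
    rw [ProbabilityTheory.cond, integral_smul_measure, ENNReal.toReal_inv, smul_eq_mul]
  set I0 := ∫ ω in s0, h (Z ω) ∂μ
  set I1 := ∫ ω in s1, h (Z ω) ∂μ
  -- positivity
  have hq0 : (0:ℝ) < (1 - ρ) * (1 - π) + ρ * π := by nlinarith
  have hq1 : (0:ℝ) < ρ * (1 - π) + (1 - ρ) * π := by nlinarith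
  set c : ℝ := 1 - (1 - π) * ρ / (π * (1 - ρ) + (1 - π) * ρ)
      - π * ρ / (π * ρ + (1 - π) * (1 - ρ)) with hc
  have hq1' : (0:ℝ) < π * (1 - ρ) + (1 - π) * ρ := by nlinarith
  have hq0' : (0:ℝ) < π * ρ + (1 - π) * (1 - ρ) := by nlinarith
  have hcval : c = π * (1 - π) * (1 - 2 * ρ)
      / ((π * ρ + (1 - π) * (1 - ρ)) * (π * (1 - ρ) + (1 - π) * ρ)) := by
    rw [hc]; field_simp; ring
  have hcpos : 0 < c := by
    rw [hcval]
    apply div_pos (mul_pos (mul_pos hπ0 (by linarith)) (by linarith)) (by positivity)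
  have hclt : c < 1 := by
    rw [hc]
    have ha : 0 < (1 - π) * ρ / (π * (1 - ρ) + (1 - π) * ρ) :=
      div_pos (by nlinarith) hq1'
    have hb : 0 < π * ρ / (π * ρ + (1 - π) * (1 - ρ)) :=
      div_pos (by nlinarith) hq0'
    linarith
  refine ⟨c, ⟨hcpos, hclt⟩, rfl, ?_⟩
  rw [hcond t0, hcond t1, hcond s0, hcond s1, hμt0, hμt1, hμs0, hμs1, hit0, hit1]
  have hkey : ((1 - ρ) * (1 - π) + ρ * π)⁻¹ * ((1 - ρ) * I0 + ρ * I1)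
      - (ρ * (1 - π) + (1 - ρ) * π)⁻¹ * (ρ * I0 + (1 - ρ) * I1)
      = c * ((1 - π)⁻¹ * I0 - π⁻¹ * I1) := by
    rw [hcval]
    exact ccn_arith ρ π I0 I1 hρ0 hρ2 hπ0 hπ1
  rw [hkey, abs_mul, abs_of_pos hcpos]
end
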